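/- Let G be a group and t1, …, t(2g-1) elements satisfying the braid relations ti t(i+1) ti = t(i+1) ti t(i+1) and ti tj = tj ti for |i − j| > 1. Then (t1 ⋯ t(2g−1))^{2g} = (t1 ⋯ t(2g−3))^{2g−2} · (t(2g−2) ⋯ t2 t1 t1 t2 ⋯ t(2g−2)) · (t(2g−1) ⋯ t2 t1 t1 t2 ⋯ t(2g−1)). -/

import Mathlib

namespace Stmt13Aux

variable {G : Type*} [Group G]

/-- forward product t 1 * t 2 * ... * t m -/
def fwd (t : ℕ → G) (m : ℕ) : G := ((List.range m).map (fun i => t (i + 1))).prod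

/-- descending product t a * t (a-1) * ... * t b -/
def dsc (t : ℕ → G) (a b : ℕ) : G := ((List.range (a + 1 - b)).map (fun i => t (a - i))).prod

/-- product of descending chains dsc k s * dsc k (s+1) * ... * dsc k (s+m-1) -/
def qtail (t : ℕ → G) (k s m : ℕ) : G := ((List.range m).map (fun j => dsc t k (s + j))).prod

/-- product fwd (k-1) * fwd (k-2) * ... * fwd (k-m) -/
def pprod (t : ℕ → G) (k m : ℕ) : G := ((List.range m).map (fun i => fwd t (k - 1 - i))).prod

lemma listprod_succ (f : ℕ → G) (n : ℕ) :
    ((List.range (n + 1)).map f).prod = ((List.range n).map f).prod * f n := by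
  simp [List.range_succ]

lemma listprod_head (f : ℕ → G) (n : ℕ) :
    ((List.range (n + 1)).map f).prod = f 0 * ((List.range n).map (fun i => f (i + 1))).prod := by
  rw [List.range_succ_eq_map, List.map_cons, List.prod_cons, List.map_map]
  rfl

lemma fwd_succ (t : ℕ → G) (m : ℕ) : fwd t (m + 1) = fwd t m * t (m + 1) := by
  exact listprod_succ (fun i => t (i + 1)) m

lemma fwd_zero (t : ℕ → G) : fwd t 0 = 1 := rfl

lemma dsc_empty (t : ℕ → G) {a b : ℕ} (h : a + 1 ≤ b) : dsc t a b = 1 := by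
  have : a + 1 - b = 0 := by omega
  simp [dsc, this]

lemma dsc_tail (t : ℕ → G) {a b : ℕ} (h : b ≤ a) : dsc t a b = dsc t a (b + 1) * t b := by
  have h1 : a + 1 - b = (a - b) + 1 := by omega
  rw [dsc, h1, listprod_succ]
  have h2 : a - (a - b) = b := by omega
  have h3 : a + 1 - (b + 1) = a - b := by omega
  rw [h2, dsc, h3]

lemma dsc_head (t : ℕ → G) {a b : ℕ} (hb : 1 ≤ b) (h : b ≤ a) :
    dsc t a b = t a * dsc t (a - 1) b := by
  have h1 : a + 1 - b = (a - b) + 1 := by omega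
  rw [dsc, h1, listprod_head]
  have h3 : (a - 1) + 1 - b = a - b := by omega
  rw [dsc, h3]
  simp only [Nat.sub_zero]
  congr 2
  apply List.map_congr_left
  intro i _
  congr 1
  omega

lemma dsc_self (t : ℕ → G) (a : ℕ) : dsc t a a = t a := by
  rw [dsc_tail t (le_refl a), dsc_empty t (le_refl (a+1)), one_mul]

lemma qtail_succ (t : ℕ → G) (k s m : ℕ) :
    qtail t k s (m + 1) = qtail t k s m * dsc t k (s + m) := by
  exact listprod_succ (fun j => dsc t k (s + j)) m

lemma qtail_head (t : ℕ → G) (k s m : ℕ) :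
    qtail t k s (m + 1) = dsc t k s * qtail t k (s + 1) m := by
  rw [qtail, listprod_head]
  simp only [Nat.add_zero]
  congr 1
  rw [qtail]
  congr 2
  funext i
  congr 1
  omega

lemma qtail_zero (t : ℕ → G) (k s : ℕ) : qtail t k s 0 = 1 := rfl

lemma pprod_succ (t : ℕ → G) (k m : ℕ) :
    pprod t k (m + 1) = pprod t k m * fwd t (k - 1 - m) := by
  exact listprod_succ (fun i => fwd t (k - 1 - i)) m

lemma pprod_head (t : ℕ → G) (k m : ℕ) :
    pprod t k (m + 1) = fwd t (k - 1) * pprod t (k - 1) m := by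
  rw [pprod, listprod_head]
  simp only [Nat.sub_zero]
  congr 1
  rw [pprod]
  congr 2
  funext i
  congr 1
  omega

lemma pprod_zero (t : ℕ → G) (k : ℕ) : pprod t k 0 = 1 := rfl

section Main

variable {G : Type*} [Group G] (t : ℕ → G) (K : ℕ)
variable (hc : ∀ i j, 1 ≤ i → i ≤ K → 1 ≤ j → j ≤ K → i + 1 < j ∨ j + 1 < i → t i * t j = t j * t i)

include hc in
/-- a single generator below a descending chain commutes with it -/
lemma comm_low_dsc {i a b : ℕ} (hi1 : 1 ≤ i) (haK : a ≤ K) (hib : i + 1 < b) :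
    Commute (t i) (dsc t a b) := by
  apply Commute.list_prod_right
  intro x hx
  obtain ⟨j, hj, rfl⟩ := List.mem_map.1 hx
  rw [List.mem_range] at hj
  exact hc i (a - j) hi1 (by omega) (by omega) (by omega) (by omega)

include hc in
/-- a single generator above a descending chain commutes with it -/
lemma comm_high_dsc {i a b : ℕ} (hiK : i ≤ K) (hb1 : 1 ≤ b) (hai : a + 1 < i) :
    Commute (t i) (dsc t a b) := by
  apply Commute.list_prod_right
  intro x hx
  obtain ⟨j, hj, rfl⟩ := List.mem_map.1 hx
  rw [List.mem_range] at hj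
  exact hc i (a - j) (by omega) hiK (by omega) (by omega) (by omega)

include hc in
/-- a forward product with all indices below a descending chain commutes with it -/
lemma comm_fwd_dsc {m a b : ℕ} (haK : a ≤ K) (hmb : m + 1 < b) :
    Commute (fwd t m) (dsc t a b) := by
  apply Commute.list_prod_left
  intro x hx
  obtain ⟨j, hj, rfl⟩ := List.mem_map.1 hx
  rw [List.mem_range] at hj
  exact comm_low_dsc t K hc (by omega) haK (by omega)

/-- splitting a descending chain -/
lemma dsc_split {a b c : ℕ} (hb1 : 1 ≤ b) (hbc : b ≤ c) (hca : c ≤ a + 1) :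
    dsc t a b = dsc t a c * dsc t (c - 1) b := by
  induction c, hbc using Nat.le_induction with
  | base =>
      rw [dsc_empty t (show (b-1) + 1 ≤ b by omega), mul_one]
  | succ c hbc ih =>
      have hca' : c ≤ a := by omega
      rw [ih (by omega), dsc_tail t hca']
      show dsc t a (c + 1) * t c * dsc t (c - 1) b = dsc t a (c + 1) * dsc t c b
      rw [dsc_head t hb1 (show b ≤ c by omega), mul_assoc]

include hc in
lemma pushB (hb : ∀ i, 1 ≤ i → i + 1 ≤ K → t i * t (i + 1) * t i = t (i + 1) * t i * t (i + 1))
    {i : ℕ} (h1 : 1 ≤ i) (h2 : i + 1 ≤ K) :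
    t i * dsc t K 1 = dsc t K 1 * t (i + 1) := by
  have hsplit : dsc t K 1 = dsc t K (i + 2) * dsc t (i + 1) 1 := by
    have := dsc_split t (a := K) (b := 1) (c := i + 2) (by omega) (by omega) (by omega)
    simpa using this
  have hd1 : dsc t (i + 1) 1 = t (i + 1) * (t i * dsc t (i - 1) 1) := by
    rw [dsc_head t (by omega) (by omega)]
    congr 1
    show dsc t i 1 = t i * dsc t (i - 1) 1
    rw [dsc_head t (by omega) h1]
  have hcomm1 : t i * dsc t K (i + 2) = dsc t K (i + 2) * t i :=
    (comm_low_dsc t K hc h1 (le_refl K) (by omega)).eq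
  have hcomm2 : t (i + 1) * dsc t (i - 1) 1 = dsc t (i - 1) 1 * t (i + 1) := by
    rcases Nat.eq_or_lt_of_le h1 with h | h
    · rw [show i - 1 = 0 by omega, dsc_empty t (by omega), one_mul, mul_one]
    · exact (comm_high_dsc t K hc (by omega) (by omega) (by omega)).eq
  have hstep : t i * dsc t (i + 1) 1 = dsc t (i + 1) 1 * t (i + 1) := by
    rw [hd1]
    calc t i * (t (i + 1) * (t i * dsc t (i - 1) 1))
        = (t i * t (i + 1) * t i) * dsc t (i - 1) 1 := by group
      _ = (t (i + 1) * t i * t (i + 1)) * dsc t (i - 1) 1 := by rw [hb i h1 h2]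
      _ = (t (i + 1) * t i) * (t (i + 1) * dsc t (i - 1) 1) := by group
      _ = (t (i + 1) * t i) * (dsc t (i - 1) 1 * t (i + 1)) := by rw [hcomm2]
      _ = (t (i + 1) * (t i * dsc t (i - 1) 1)) * t (i + 1) := by group
  rw [hsplit]
  calc t i * (dsc t K (i + 2) * dsc t (i + 1) 1)
      = (t i * dsc t K (i + 2)) * dsc t (i + 1) 1 := by group
    _ = dsc t K (i + 2) * (t i * dsc t (i + 1) 1) := by rw [hcomm1]; group
    _ = dsc t K (i + 2) * (dsc t (i + 1) 1 * t (i + 1)) := by rw [hstep]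
    _ = dsc t K (i + 2) * dsc t (i + 1) 1 * t (i + 1) := by group

include hc in
lemma shiftd (hb : ∀ i, 1 ≤ i → i + 1 ≤ K → t i * t (i + 1) * t i = t (i + 1) * t i * t (i + 1)) :
    ∀ m j, 1 ≤ j → K - j ≤ m → dsc t (K - 1) j * dsc t K 1 = dsc t K 1 * dsc t K (j + 1) := by
  intro m
  induction m with
  | zero =>
      intro j hj hm
      rw [dsc_empty t (show K - 1 + 1 ≤ j by omega), dsc_empty t (show K + 1 ≤ j + 1 by omega),
        one_mul, mul_one]
  | succ m ih =>
      intro j hj hm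
      by_cases hcase : K ≤ j
      · rw [dsc_empty t (show K - 1 + 1 ≤ j by omega), dsc_empty t (show K + 1 ≤ j + 1 by omega),
          one_mul, mul_one]
      · have hjK : j + 1 ≤ K := by omega
        rw [dsc_tail t (show j ≤ K - 1 by omega)]
        calc dsc t (K - 1) (j + 1) * t j * dsc t K 1
            = dsc t (K - 1) (j + 1) * (t j * dsc t K 1) := by group
          _ = dsc t (K - 1) (j + 1) * (dsc t K 1 * t (j + 1)) := by
                rw [pushB t K hc hb hj hjK]
          _ = (dsc t (K - 1) (j + 1) * dsc t K 1) * t (j + 1) := by group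
          _ = (dsc t K 1 * dsc t K (j + 2)) * t (j + 1) := by
                rw [ih (j + 1) (by omega) (by omega)]
          _ = dsc t K 1 * dsc t K (j + 1) := by
                rw [mul_assoc]
                congr 1
                rw [dsc_tail t (show j + 1 ≤ K by omega)]

include hc in
lemma elemShift (hb : ∀ i, 1 ≤ i → i + 1 ≤ K → t i * t (i + 1) * t i = t (i + 1) * t i * t (i + 1)) :
    ∀ m, qtail t (K - 1) 1 m * dsc t K 1 = dsc t K 1 * qtail t K 2 m := by
  intro m
  induction m with
  | zero => rw [qtail_zero, qtail_zero, one_mul, mul_one]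
  | succ m ih =>
      rw [qtail_succ, qtail_succ]
      have e1 : (1 : ℕ) + m = m + 1 := by omega
      have e2 : (2 : ℕ) + m = m + 2 := by omega
      rw [e1, e2]
      calc (qtail t (K - 1) 1 m * dsc t (K - 1) (m + 1)) * dsc t K 1
          = qtail t (K - 1) 1 m * (dsc t (K - 1) (m + 1) * dsc t K 1) := by group
        _ = qtail t (K - 1) 1 m * (dsc t K 1 * dsc t K (m + 2)) := by
              rw [shiftd t K hc hb K (m + 1) (by omega) (by omega)]
        _ = (qtail t (K - 1) 1 m * dsc t K 1) * dsc t K (m + 2) := by group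
        _ = (dsc t K 1 * qtail t K 2 m) * dsc t K (m + 2) := by rw [ih]
        _ = dsc t K 1 * (qtail t K 2 m * dsc t K (m + 2)) := by group

include hc in
lemma Edec (hb : ∀ i, 1 ≤ i → i + 1 ≤ K → t i * t (i + 1) * t i = t (i + 1) * t i * t (i + 1))
    (hk : 1 ≤ K) : qtail t K 1 K = qtail t (K - 1) 1 (K - 1) * dsc t K 1 := by
  have h := qtail_head t K 1 (K - 1)
  have e : K - 1 + 1 = K := by omega
  rw [e] at h
  rw [h]
  exact (elemShift t K hc hb (K - 1)).symm

include hc in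
lemma Dlem {j : ℕ} (hd2 : 2 ≤ j) (hjK : j ≤ K + 1) :
    dsc t K j * fwd t (j - 1) = fwd t (j - 2) * dsc t K (j - 1) := by
  have e1 : j - 1 = (j - 2) + 1 := by omega
  rw [e1, fwd_succ]
  have hcm : Commute (fwd t (j - 2)) (dsc t K j) :=
    comm_fwd_dsc t K hc (le_refl K) (by omega)
  calc dsc t K j * (fwd t (j - 2) * t (j - 2 + 1))
      = (dsc t K j * fwd t (j - 2)) * t (j - 2 + 1) := by group
    _ = (fwd t (j - 2) * dsc t K j) * t (j - 2 + 1) := by rw [← hcm.eq]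
    _ = fwd t (j - 2) * (dsc t K j * t (j - 2 + 1)) := by group
    _ = fwd t (j - 2) * dsc t K (j - 2 + 1) := by
          congr 1
          have e3 : j - 2 + 1 ≤ K := by omega
          have e4 : j - 2 + 1 + 1 = j := by omega
          rw [dsc_tail t e3, e4]

include hc in
lemma SL (hb : ∀ i, 1 ≤ i → i + 1 ≤ K → t i * t (i + 1) * t i = t (i + 1) * t i * t (i + 1)) :
    ∀ m, m ≤ K - 1 →
      qtail t K (K - m + 1) m * fwd t (K - 1) = fwd t (K - 1 - m) * qtail t K (K - m) m := by
  intro m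
  induction m with
  | zero => simp [qtail_zero]
  | succ m ih =>
      intro hm
      have e1 : K - (m + 1) + 1 = K - m := by omega
      rw [e1, qtail_head, qtail_head]
      rw [e1]
      calc (dsc t K (K - m) * qtail t K (K - m + 1) m) * fwd t (K - 1)
          = dsc t K (K - m) * (qtail t K (K - m + 1) m * fwd t (K - 1)) := by group
        _ = dsc t K (K - m) * (fwd t (K - 1 - m) * qtail t K (K - m) m) := by
              rw [ih (by omega)]
        _ = (dsc t K (K - m) * fwd t (K - 1 - m)) * qtail t K (K - m) m := by group
        _ = (fwd t (K - m - 2) * dsc t K (K - m - 1)) * qtail t K (K - m) m := by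
              have e2 : K - 1 - m = K - m - 1 := by omega
              rw [e2, Dlem t K hc (show 2 ≤ K - m by omega) (by omega)]
        _ = fwd t (K - 1 - (m + 1)) * (dsc t K (K - (m + 1)) * qtail t K (K - m) m) := by
              have e3 : K - m - 2 = K - 1 - (m + 1) := by omega
              have e4 : K - m - 1 = K - (m + 1) := by omega
              rw [e3, e4]
              group

include hc in
lemma Apow (hb : ∀ i, 1 ≤ i → i + 1 ≤ K → t i * t (i + 1) * t i = t (i + 1) * t i * t (i + 1)) :
    ∀ m, m ≤ K → fwd t K ^ m = pprod t K m * qtail t K (K - m + 1) m := by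
  intro m
  induction m with
  | zero => simp [qtail_zero, pprod_zero]
  | succ m ih =>
      intro hm
      have e1 : K - (m + 1) + 1 = K - m := by omega
      rw [pow_succ, ih (by omega), e1]
      have hfK : fwd t K = fwd t (K - 1) * t K := by
        have h := fwd_succ t (K - 1)
        have e : K - 1 + 1 = K := by omega
        rw [e] at h
        exact h
      rw [hfK]
      calc (pprod t K m * qtail t K (K - m + 1) m) * (fwd t (K - 1) * t K)
          = pprod t K m * (qtail t K (K - m + 1) m * fwd t (K - 1)) * t K := by group
        _ = pprod t K m * (fwd t (K - 1 - m) * qtail t K (K - m) m) * t K := by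
              rw [SL t K hc hb m (by omega)]
        _ = (pprod t K m * fwd t (K - 1 - m)) * (qtail t K (K - m) m * dsc t K K) := by
              rw [dsc_self]
              group
        _ = pprod t K (m + 1) * qtail t K (K - m) (m + 1) := by
              rw [pprod_succ, qtail_succ]
              have e2 : K - m + m = K := by omega
              rw [e2]

include hc in
lemma chainC (hb : ∀ i, 1 ≤ i → i + 1 ≤ K → t i * t (i + 1) * t i = t (i + 1) * t i * t (i + 1))
    (hk : 1 ≤ K) : fwd t K ^ K = fwd t (K - 1) ^ K * dsc t K 1 := by
  have hA := Apow t K hc hb K (le_refl K)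
  rw [show K - K + 1 = 1 by omega] at hA
  have hE := Edec t K hc hb hk
  have hc' : ∀ i j, 1 ≤ i → i ≤ K - 1 → 1 ≤ j → j ≤ K - 1 → i + 1 < j ∨ j + 1 < i →
      t i * t j = t j * t i := fun i j h1 h2 h3 h4 h5 => hc i j h1 (by omega) h3 (by omega) h5
  have hb' : ∀ i, 1 ≤ i → i + 1 ≤ K - 1 → t i * t (i + 1) * t i = t (i + 1) * t i * t (i + 1) :=
    fun i h1 h2 => hb i h1 (by omega)
  have hA' := Apow t (K - 1) hc' hb' (K - 1) (le_refl (K - 1))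
  rw [show K - 1 - (K - 1) + 1 = 1 by omega] at hA'
  have hP : pprod t K K = fwd t (K - 1) * pprod t (K - 1) (K - 1) := by
    have h := pprod_head t K (K - 1)
    have e : K - 1 + 1 = K := by omega
    rw [e] at h
    exact h
  calc fwd t K ^ K = pprod t K K * qtail t K 1 K := hA
    _ = pprod t K K * (qtail t (K - 1) 1 (K - 1) * dsc t K 1) := by rw [hE]
    _ = (fwd t (K - 1) * (pprod t (K - 1) (K - 1) * qtail t (K - 1) 1 (K - 1))) * dsc t K 1 := by
          rw [hP]
          group
    _ = (fwd t (K - 1) * fwd t (K - 1) ^ (K - 1)) * dsc t K 1 := by rw [← hA']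
    _ = fwd t (K - 1) ^ K * dsc t K 1 := by
          congr 1
          rw [← pow_succ']
          congr 1
          omega

end Main

end Stmt13Aux




theorem stmt13 {G : Type*} [Group G] (g : ℕ) (hg : 2 ≤ g) (t : ℕ → G)
    (hbraid : ∀ i, 1 ≤ i → i ≤ 2 * g - 2 →
      t i * t (i + 1) * t i = t (i + 1) * t i * t (i + 1))
    (hcomm : ∀ i j, 1 ≤ i → i ≤ 2 * g - 1 → 1 ≤ j → j ≤ 2 * g - 1 →
      (i : ℤ) - j > 1 ∨ (j : ℤ) - i > 1 → t i * t j = t j * t i) :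
    (((List.range (2 * g - 1)).map (fun i => t (i + 1))).prod) ^ (2 * g) =
      (((List.range (2 * g - 3)).map (fun i => t (i + 1))).prod) ^ (2 * g - 2) *
        ((((List.range (2 * g - 2)).map (fun i => t (2 * g - 2 - i))).prod) *
          (((List.range (2 * g - 2)).map (fun i => t (i + 1))).prod)) *
        ((((List.range (2 * g - 1)).map (fun i => t (2 * g - 1 - i))).prod) *
          (((List.range (2 * g - 1)).map (fun i => t (i + 1))).prod)) := by
  have hb1 : ∀ i, 1 ≤ i → i + 1 ≤ 2 * g - 1 →
      t i * t (i + 1) * t i = t (i + 1) * t i * t (i + 1) :=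
    fun i h1 h2 => hbraid i h1 (by omega)
  have hc1 : ∀ i j, 1 ≤ i → i ≤ 2 * g - 1 → 1 ≤ j → j ≤ 2 * g - 1 →
      i + 1 < j ∨ j + 1 < i → t i * t j = t j * t i := by
    intro i j h1 h2 h3 h4 h5
    refine hcomm i j h1 h2 h3 h4 ?_
    rcases h5 with h | h
    · right; omega
    · left; omega
  have hb2 : ∀ i, 1 ≤ i → i + 1 ≤ 2 * g - 2 →
      t i * t (i + 1) * t i = t (i + 1) * t i * t (i + 1) :=
    fun i h1 h2 => hbraid i h1 (by omega)
  have hc2 : ∀ i j, 1 ≤ i → i ≤ 2 * g - 2 → 1 ≤ j → j ≤ 2 * g - 2 →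
      i + 1 < j ∨ j + 1 < i → t i * t j = t j * t i :=
    fun i j h1 h2 h3 h4 h5 => hc1 i j h1 (by omega) h3 (by omega) h5
  have hC1 := Stmt13Aux.chainC t (2 * g - 1) hc1 hb1 (by omega)
  rw [show 2 * g - 1 - 1 = 2 * g - 2 by omega] at hC1
  have hC2 := Stmt13Aux.chainC t (2 * g - 2) hc2 hb2 (by omega)
  rw [show 2 * g - 2 - 1 = 2 * g - 3 by omega] at hC2
  have hpow1 : Stmt13Aux.fwd t (2 * g - 1) ^ (2 * g) =
      Stmt13Aux.fwd t (2 * g - 1) ^ (2 * g - 1) * Stmt13Aux.fwd t (2 * g - 1) := by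
    rw [← pow_succ]
    congr 1
    omega
  have hpow2 : Stmt13Aux.fwd t (2 * g - 2) ^ (2 * g - 1) =
      Stmt13Aux.fwd t (2 * g - 2) ^ (2 * g - 2) * Stmt13Aux.fwd t (2 * g - 2) := by
    rw [← pow_succ]
    congr 1
    omega
  show Stmt13Aux.fwd t (2 * g - 1) ^ (2 * g) =
      Stmt13Aux.fwd t (2 * g - 3) ^ (2 * g - 2) *
        (Stmt13Aux.dsc t (2 * g - 2) 1 * Stmt13Aux.fwd t (2 * g - 2)) *
        (Stmt13Aux.dsc t (2 * g - 1) 1 * Stmt13Aux.fwd t (2 * g - 1))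
  rw [hpow1, hC1, hpow2, hC2]
  simp only [mul_assoc]
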